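/- The φ-splice C₂ ▵_φ C₁ equals A_Γ (as functions on [0,1]²) if and only if for every (x, y) ∈ [0,1]² the following two conditions are satisfied: (i) if y > φ(x) and min_{t ∈ [x, φ⁻¹(y)]} Γ̃(t) < min{Γ̃(x), Γ̃(φ⁻¹(y))}, then y − x > max{Γ̃(x), Γ̃(φ⁻¹(y))}; (ii) if y < φ(x) and min_{t ∈ [φ⁻¹(y), x]} Γ̂(t) < min{Γ̂(x), Γ̂(φ⁻¹(y))}, then x − y > max{Γ̂(x), Γ̂(φ⁻¹(y))}. -/

import Mathlib

open Set MeasureTheory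

/-- `Γ̂(t) = t - Γ(t)`. -/
def Ghat (Γ : ℝ → ℝ) : ℝ → ℝ := fun t => t - Γ t

/-- `Γ̃(t) = φ(t) - Γ(t)`. -/
def Gtil (φ Γ : ℝ → ℝ) : ℝ → ℝ := fun t => φ t - Γ t

/-- The (signed) total variation `V_a^b(f)` of `f` on `[a, b] ⊆ [0, 1]`, with
the conventions `V_b^a(f) = -V_a^b(f)` and `V_a^a(f) = 0`. -/
noncomputable def sV (f : ℝ → ℝ) (a b : ℝ) : ℝ := variationOnFromTo f (Set.Icc 0 1) a b

/-- `f₁(x, y) = x - (1/2) (V_{φ⁻¹(y)}^x(Γ̂) + Γ̂(x) + Γ̂(φ⁻¹(y)))`, where `ψ = φ⁻¹`. -/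
noncomputable def f1 (ψ Γ : ℝ → ℝ) (x y : ℝ) : ℝ :=
  x - (1/2) * (sV (Ghat Γ) (ψ y) x + Ghat Γ x + Ghat Γ (ψ y))

/-- `f₂(x, y) = y - (1/2) (V_x^{φ⁻¹(y)}(Γ̃) + Γ̃(x) + Γ̃(φ⁻¹(y)))`, where `ψ = φ⁻¹`. -/
noncomputable def f2 (φ ψ Γ : ℝ → ℝ) (x y : ℝ) : ℝ :=
  y - (1/2) * (sV (Gtil φ Γ) x (ψ y) + Gtil φ Γ x + Gtil φ Γ (ψ y))

/-- `C₁(x, y) = min {x, y, f₁(x, y)}`. -/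
noncomputable def C1 (ψ Γ : ℝ → ℝ) (x y : ℝ) : ℝ := min x (min y (f1 ψ Γ x y))

/-- `C₂(x, y) = min {x, y, f₂(x, y)}`. -/
noncomputable def C2 (φ ψ Γ : ℝ → ℝ) (x y : ℝ) : ℝ := min x (min y (f2 φ ψ Γ x y))

/-- The φ-splice `C₂ ▵_φ C₁`: equal to `C₁` when `y ≤ φ(x)`, to `C₂` when `y ≥ φ(x)`. -/
noncomputable def splice (φ ψ Γ : ℝ → ℝ) (x y : ℝ) : ℝ :=
  if y ≤ φ x then C1 ψ Γ x y else C2 φ ψ Γ x y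

/-- A copula on `[0,1]²`: boundary conditions and 2-increasingness. -/
def IsCopula (C : ℝ → ℝ → ℝ) : Prop :=
  (∀ x ∈ Set.Icc (0:ℝ) 1, ∀ y ∈ Set.Icc (0:ℝ) 1, C x y ∈ Set.Icc (0:ℝ) 1) ∧
  (∀ x ∈ Set.Icc (0:ℝ) 1, C x 0 = 0 ∧ C 0 x = 0 ∧ C x 1 = x ∧ C 1 x = x) ∧
  (∀ x₁ x₂ y₁ y₂ : ℝ, x₁ ∈ Set.Icc (0:ℝ) 1 → x₂ ∈ Set.Icc (0:ℝ) 1 →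
    y₁ ∈ Set.Icc (0:ℝ) 1 → y₂ ∈ Set.Icc (0:ℝ) 1 → x₁ ≤ x₂ → y₁ ≤ y₂ →
    0 ≤ C x₂ y₂ - C x₂ y₁ - C x₁ y₂ + C x₁ y₁)

/-- The greatest quasi-copula `A_Γ` with curvilinear section `Γ` (`ψ = φ⁻¹`). -/
noncomputable def AG (φ ψ Γ : ℝ → ℝ) (x y : ℝ) : ℝ :=
  if y ≤ φ x then min y (x - sSup (Ghat Γ '' Set.Icc (ψ y) x))
  else min x (y - sSup (Gtil φ Γ '' Set.Icc x (ψ y)))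


open Topology Filter

lemma real_edist_eq (x y : ℝ) : edist x y = ENNReal.ofReal |x - y| := by
  rw [edist_dist, Real.dist_eq]

lemma evar_sub_le (f g : ℝ → ℝ) (s : Set ℝ) :
    eVariationOn (fun t => f t - g t) s ≤ eVariationOn f s + eVariationOn g s := by
  refine iSup_le ?_
  rintro ⟨n, ⟨u, hu, us⟩⟩
  calc ∑ i ∈ Finset.range n, edist (f (u (i+1)) - g (u (i+1))) (f (u i) - g (u i))
      ≤ ∑ i ∈ Finset.range n, (edist (f (u (i+1))) (f (u i)) + edist (g (u (i+1))) (g (u i))) := by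
        refine Finset.sum_le_sum fun i _ => ?_
        rw [real_edist_eq, real_edist_eq, real_edist_eq, ← ENNReal.ofReal_add (abs_nonneg _) (abs_nonneg _)]
        refine ENNReal.ofReal_le_ofReal ?_
        have : f (u (i+1)) - g (u (i+1)) - (f (u i) - g (u i))
            = (f (u (i+1)) - f (u i)) - (g (u (i+1)) - g (u i)) := by ring
        rw [this]
        exact abs_sub (f (u (i+1)) - f (u i)) (g (u (i+1)) - g (u i))
    _ = ∑ i ∈ Finset.range n, edist (f (u (i+1))) (f (u i))
        + ∑ i ∈ Finset.range n, edist (g (u (i+1))) (g (u i)) := Finset.sum_add_distrib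
    _ ≤ _ := add_le_add (eVariationOn.sum_le (f := f) (n := n) hu us) (eVariationOn.sum_le (f := g) (n := n) hu us)

/-- finite-sequence no-valley lemma -/
lemma seq_aux {h : ℝ → ℝ} {p r : ℝ}
    (hnv : ∀ p' q' r', p' ∈ Icc p r → q' ∈ Icc p r → r' ∈ Icc p r → p' < q' → q' < r' →
      min (h p') (h r') ≤ h q')
    (u : ℕ → ℝ) (hu : Monotone u) (hmem : ∀ i, u i ∈ Icc p r) :
    ∀ n : ℕ, ∃ j ≤ n, (∑ i ∈ Finset.range n, |h (u (i+1)) - h (u i)|)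
      ≤ 2 * h (u j) - h (u 0) - h (u n) ∧ ∀ i ≤ n, h (u i) ≤ h (u j) := by
  intro n
  induction n with
  | zero => exact ⟨0, le_rfl, by simp; linarith, fun i hi => by simp_all⟩
  | succ n ih =>
    obtain ⟨j, hjn, hsum, hmax⟩ := ih
    rcases le_or_gt (h (u (n+1))) (h (u n)) with hle | hlt
    · refine ⟨j, hjn.trans n.le_succ, ?_, ?_⟩
      · rw [Finset.sum_range_succ]
        have : |h (u (n+1)) - h (u n)| = h (u n) - h (u (n+1)) := by
          rw [abs_sub_comm]; exact abs_of_nonneg (by linarith)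
        linarith
      · intro i hi
        rcases Nat.le_succ_iff.mp hi with hi' | hi'
        · exact hmax i hi'
        · subst hi'; exact hle.trans (hmax n le_rfl)
    · -- h (u n) < h (u (n+1)) : then u n is a running max
      have hnmax : ∀ i ≤ n, h (u i) ≤ h (u n) := by
        intro i hi
        by_contra hgt
        push_neg at hgt
        have h1 : u i < u n := by
          rcases lt_or_eq_of_le (hu hi) with h' | h'
          · exact h'
          · rw [h'] at hgt; exact absurd rfl (ne_of_gt hgt)
        have h2 : u n < u (n+1) := by
          rcases lt_or_eq_of_le (hu n.le_succ) with h' | h'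
          · exact h'
          · rw [h'] at hlt; exact absurd rfl (ne_of_gt hlt)
        have := hnv (u i) (u n) (u (n+1)) (hmem i) (hmem n) (hmem (n+1)) h1 h2
        have h3 : h (u n) < h (u n) := lt_of_lt_of_le (lt_min hgt hlt) this
        exact absurd h3 (lt_irrefl _)
      refine ⟨n+1, le_rfl, ?_, ?_⟩
      · rw [Finset.sum_range_succ]
        have habs : |h (u (n+1)) - h (u n)| = h (u (n+1)) - h (u n) :=
          abs_of_nonneg (by linarith)
        have hjn' := hnmax j hjn
        linarith
      · intro i hi
        rcases Nat.le_succ_iff.mp hi with hi' | hi'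
        · exact (hnmax i hi').trans hlt.le
        · subst hi'; exact le_rfl


section NV
variable {h : ℝ → ℝ} {p r K : ℝ}


lemma evar_le_of_no_valley (hpr : p ≤ r)
    (hnv : ∀ p' q' r', p' ∈ Icc p r → q' ∈ Icc p r → r' ∈ Icc p r → p' < q' → q' < r' →
      min (h p') (h r') ≤ h q')
    (hK : ∀ t ∈ Icc p r, h t ≤ K) :
    eVariationOn h (Icc p r) ≤ ENNReal.ofReal (2*K - h p - h r) := by
  refine iSup_le ?_
  rintro ⟨n, ⟨u, hu, us⟩⟩
  set w : ℕ → ℝ := fun i => if i = 0 then p else if i ≤ n + 1 then u (i - 1) else r with hw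
  have hw0 : w 0 = p := rfl
  have hwmid : ∀ i ≤ n, w (i + 1) = u i := by
    intro i hi
    simp only [hw]
    rw [if_neg (Nat.succ_ne_zero i), if_pos (by omega), Nat.add_sub_cancel]
  have hwlast : w (n + 2) = r := by
    simp only [hw]; rw [if_neg (by omega), if_neg (by omega)]
  have hwmem : ∀ i, w i ∈ Icc p r := by
    intro i
    simp only [hw]
    split
    · exact ⟨le_rfl, hpr⟩
    · split
      · exact us _
      · exact ⟨hpr, le_rfl⟩
  have hwbig : ∀ i, n + 2 ≤ i → w i = r := by
    intro i hi
    simp only [hw]; rw [if_neg (by omega), if_neg (by omega)]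
  have hwmono : Monotone w := by
    apply monotone_nat_of_le_succ
    intro i
    rcases Nat.eq_zero_or_pos i with rfl | hpos
    · rw [hw0, hwmid 0 (Nat.zero_le n)]
      exact (us 0).1
    · obtain ⟨i', rfl⟩ := Nat.exists_eq_succ_of_ne_zero (Nat.pos_iff_ne_zero.mp hpos)
      rcases le_or_gt (i' + 1) n with hle | hgt
      · rw [hwmid i' (by omega), hwmid (i' + 1) hle]
        exact hu (Nat.le_succ i')
      · rcases eq_or_lt_of_le (Nat.succ_le_of_lt hgt) with heq | hgt2
        · rw [hwmid i' (by omega), show i' + 1 + 1 = n + 2 by omega, hwlast]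
          exact (us i').2
        · rw [hwbig _ (by omega), hwbig _ (by omega)]
  -- the LHS sum is bounded by the extended sum
  obtain ⟨j, hj, hsum, hmax⟩ := seq_aux hnv w hwmono hwmem (n + 2)
  have hKj : h (w j) ≤ K := hK _ (hwmem j)
  have hbound : (∑ i ∈ Finset.range (n+2), |h (w (i+1)) - h (w i)|) ≤ 2*K - h p - h r := by
    rw [hw0, hwlast] at hsum; linarith
  have hmono_sum : (∑ i ∈ Finset.range n, |h (u (i+1)) - h (u i)|)
      ≤ ∑ i ∈ Finset.range (n+2), |h (w (i+1)) - h (w i)| := by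
    have e1 : ∑ i ∈ Finset.range (n+2), |h (w (i+1)) - h (w i)|
        = (∑ i ∈ Finset.range (n+1), |h (w (i+1+1)) - h (w (i+1))|) + |h (w 1) - h (w 0)| :=
      Finset.sum_range_succ' _ (n+1)
    have e2 : ∑ i ∈ Finset.range (n+1), |h (w (i+1+1)) - h (w (i+1))|
        = (∑ i ∈ Finset.range n, |h (w (i+2)) - h (w (i+1))|) + |h (w (n+2)) - h (w (n+1))| := by
      rw [Finset.sum_range_succ]
    have e3 : ∀ i ∈ Finset.range n, |h (w (i+2)) - h (w (i+1))| = |h (u (i+1)) - h (u i)| := by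
      intro i hi
      rw [Finset.mem_range] at hi
      rw [hwmid i (by omega), show i+2 = (i+1)+1 by ring, hwmid (i+1) (by omega)]
    rw [e1, e2, Finset.sum_congr rfl e3]
    have := abs_nonneg (h (w 1) - h (w 0))
    have := abs_nonneg (h (w (n+2)) - h (w (n+1)))
    linarith
  calc ∑ i ∈ Finset.range n, edist (h (u (i+1))) (h (u i))
      = ENNReal.ofReal (∑ i ∈ Finset.range n, |h (u (i+1)) - h (u i)|) := by
        rw [ENNReal.ofReal_sum_of_nonneg (fun i _ => abs_nonneg _)]
        exact Finset.sum_congr rfl fun i _ => real_edist_eq _ _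
    _ ≤ _ := ENNReal.ofReal_le_ofReal (hmono_sum.trans hbound)
end NV

section Core
variable {a b : ℝ} {h A B : ℝ → ℝ}

-- finiteness of variation when h = A - G with A, G monotone
lemma evar_ne_top (hab : a ≤ b)
    (hAmono : MonotoneOn A (Icc a b)) (hGmono : MonotoneOn (fun t => A t - h t) (Icc a b))
    {p r : ℝ} (hp : a ≤ p) (hpr : p ≤ r) (hr : r ≤ b) :
    eVariationOn h (Icc p r) ≠ ⊤ := by
  have hsub : Icc p r ⊆ Icc a b := Icc_subset_Icc hp hr
  have he : EqOn h (fun t => A t - (A t - h t)) (Icc p r) := fun t _ => by ring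
  have h1 : eVariationOn h (Icc p r)
      = eVariationOn (fun t => A t - (A t - h t)) (Icc p r) := eVariationOn.eq_of_eqOn he
  have h2 := evar_sub_le A (fun t => A t - h t) (Icc p r)
  have hA' : MonotoneOn A (Icc p r) := hAmono.mono hsub
  have hG' : MonotoneOn (fun t => A t - h t) (Icc p r) := hGmono.mono hsub
  have h3 : eVariationOn A (Icc p r) ≤ ENNReal.ofReal (A r - A p) := by
    have := hA'.eVariationOn_le (left_mem_Icc.2 hpr) (right_mem_Icc.2 hpr)
    rwa [Set.inter_eq_self_of_subset_right (Icc_subset_Icc le_rfl le_rfl)] at this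
  have h4 : eVariationOn (fun t => A t - h t) (Icc p r)
      ≤ ENNReal.ofReal ((A r - h r) - (A p - h p)) := by
    have := hG'.eVariationOn_le (left_mem_Icc.2 hpr) (right_mem_Icc.2 hpr)
    rwa [Set.inter_eq_self_of_subset_right (Icc_subset_Icc le_rfl le_rfl)] at this
  rw [h1]
  exact ne_top_of_le_ne_top (by simp) (h2.trans (add_le_add h3 h4))

-- real variation bound : v p r ≤ (A r - A p) + (G r - G p)
lemma vreal_le (hab : a ≤ b)
    (hAmono : MonotoneOn A (Icc a b)) (hGmono : MonotoneOn (fun t => A t - h t) (Icc a b))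
    {p r : ℝ} (hp : a ≤ p) (hpr : p ≤ r) (hr : r ≤ b) :
    (eVariationOn h (Icc p r)).toReal ≤ (A r - A p) + ((A r - h r) - (A p - h p)) := by
  have hsub : Icc p r ⊆ Icc a b := Icc_subset_Icc hp hr
  have he : EqOn h (fun t => A t - (A t - h t)) (Icc p r) := fun t _ => by ring
  have h1 : eVariationOn h (Icc p r)
      = eVariationOn (fun t => A t - (A t - h t)) (Icc p r) := eVariationOn.eq_of_eqOn he
  have h2 := evar_sub_le A (fun t => A t - h t) (Icc p r)
  have h3 : eVariationOn A (Icc p r) ≤ ENNReal.ofReal (A r - A p) := by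
    have := (hAmono.mono hsub).eVariationOn_le (left_mem_Icc.2 hpr) (right_mem_Icc.2 hpr)
    rwa [Set.inter_eq_self_of_subset_right (Icc_subset_Icc le_rfl le_rfl)] at this
  have h4 : eVariationOn (fun t => A t - h t) (Icc p r)
      ≤ ENNReal.ofReal ((A r - h r) - (A p - h p)) := by
    have := (hGmono.mono hsub).eVariationOn_le (left_mem_Icc.2 hpr) (right_mem_Icc.2 hpr)
    rwa [Set.inter_eq_self_of_subset_right (Icc_subset_Icc le_rfl le_rfl)] at this
  have h5 : eVariationOn h (Icc p r)
      ≤ ENNReal.ofReal (A r - A p) + ENNReal.ofReal ((A r - h r) - (A p - h p)) := by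
    rw [h1]; exact h2.trans (add_le_add h3 h4)
  have hApr : A p ≤ A r := hAmono (hsub (left_mem_Icc.2 hpr)) (hsub (right_mem_Icc.2 hpr)) hpr
  have hGpr : A p - h p ≤ A r - h r :=
    hGmono (hsub (left_mem_Icc.2 hpr)) (hsub (right_mem_Icc.2 hpr)) hpr
  calc (eVariationOn h (Icc p r)).toReal
      ≤ (ENNReal.ofReal (A r - A p) + ENNReal.ofReal ((A r - h r) - (A p - h p))).toReal := by
        refine ENNReal.toReal_mono (by simp) h5
    _ = (A r - A p) + ((A r - h r) - (A p - h p)) := by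
        rw [ENNReal.toReal_add (by simp) (by simp), ENNReal.toReal_ofReal (by linarith),
          ENNReal.toReal_ofReal (by linarith)]

-- additivity of real variation
lemma vreal_add (hab : a ≤ b)
    (hAmono : MonotoneOn A (Icc a b)) (hGmono : MonotoneOn (fun t => A t - h t) (Icc a b))
    {p q r : ℝ} (hp : a ≤ p) (hpq : p ≤ q) (hqr : q ≤ r) (hr : r ≤ b) :
    (eVariationOn h (Icc p r)).toReal
      = (eVariationOn h (Icc p q)).toReal + (eVariationOn h (Icc q r)).toReal := by
  have key := eVariationOn.Icc_add_Icc h (s := Icc p r) hpq hqr ⟨hpq, hqr⟩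
  rw [Set.inter_eq_self_of_subset_right (Icc_subset_Icc le_rfl hqr),
    Set.inter_eq_self_of_subset_right (Icc_subset_Icc hpq le_rfl),
    Set.inter_eq_self_of_subset_right (Icc_subset_Icc le_rfl le_rfl)] at key
  rw [← key, ENNReal.toReal_add
    (evar_ne_top hab hAmono hGmono hp hpq (hqr.trans hr))
    (evar_ne_top hab hAmono hGmono (hp.trans hpq) hqr hr)]

-- |h r - h p| ≤ v p r
lemma vreal_dist (hab : a ≤ b)
    (hAmono : MonotoneOn A (Icc a b)) (hGmono : MonotoneOn (fun t => A t - h t) (Icc a b))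
    {p r : ℝ} (hp : a ≤ p) (hpr : p ≤ r) (hr : r ≤ b) :
    |h r - h p| ≤ (eVariationOn h (Icc p r)).toReal := by
  have h1 : edist (h p) (h r) ≤ eVariationOn h (Icc p r) :=
    eVariationOn.edist_le h (left_mem_Icc.2 hpr) (right_mem_Icc.2 hpr)
  have h2 : (edist (h p) (h r)).toReal ≤ (eVariationOn h (Icc p r)).toReal :=
    ENNReal.toReal_mono (evar_ne_top hab hAmono hGmono hp hpr hr) h1
  rwa [real_edist_eq, ENNReal.toReal_ofReal (abs_nonneg _), abs_sub_comm] at h2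

-- max attainment and sSup
lemma exists_max_sSup {p r : ℝ} (hpr : p ≤ r) (hc : ContinuousOn h (Icc p r)) :
    ∃ c ∈ Icc p r, (∀ t ∈ Icc p r, h t ≤ h c) ∧ sSup (h '' Icc p r) = h c := by
  obtain ⟨c, hcmem, hcmax⟩ := isCompact_Icc.exists_isMaxOn (nonempty_Icc.2 hpr) hc
  refine ⟨c, hcmem, fun t ht => hcmax ht, le_antisymm ?_ ?_⟩
  · exact csSup_le ((nonempty_Icc.2 hpr).image h) (by rintro y ⟨t, ht, rfl⟩; exact hcmax ht)
  · exact le_csSup ⟨h c, by rintro y ⟨t, ht, rfl⟩; exact hcmax ht⟩ ⟨c, hcmem, rfl⟩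

end Core

section Main
variable {a b : ℝ} {h A B : ℝ → ℝ}

theorem coreA (hab : a ≤ b)
    (hhc : ContinuousOn h (Icc a b))
    (hAmono : MonotoneOn A (Icc a b)) (hAc : ContinuousOn A (Icc a b))
    (hGmono : MonotoneOn (fun t => A t - h t) (Icc a b))
    (hBmono : MonotoneOn B (Icc a b))
    (hstar : ∀ p q r, a ≤ p → p < q → q < r → r ≤ b → h q < min (h p) (h r) →
      max (h p) (h r) < A r - B p) :
    (A b - (1/2)*((eVariationOn h (Icc a b)).toReal + h a + h b)
        ≤ A b - sSup (h '' Icc a b)) ∧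
    min (B a) (A b - (1/2)*((eVariationOn h (Icc a b)).toReal + h a + h b))
      = min (B a) (A b - sSup (h '' Icc a b)) := by
  obtain ⟨c, hcmem, hcmax, hcsup⟩ := exists_max_sSup hab hhc
  set V : ℝ := (eVariationOn h (Icc a b)).toReal with hV
  -- lower bound : 2 h c - h a - h b ≤ V
  have hVlow : 2 * h c - h a - h b ≤ V := by
    have e := vreal_add hab hAmono hGmono le_rfl hcmem.1 hcmem.2 le_rfl
    have d1 := vreal_dist hab hAmono hGmono le_rfl hcmem.1 hcmem.2
    have d2 := vreal_dist hab hAmono hGmono hcmem.1 hcmem.2 le_rfl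
    have a1 : h c - h a ≤ |h c - h a| := le_abs_self _
    have a2 : h c - h b ≤ |h b - h c| := by rw [abs_sub_comm]; exact le_abs_self _
    rw [hV, e]; linarith
  have part1 : A b - (1/2)*(V + h a + h b) ≤ A b - sSup (h '' Icc a b) := by
    rw [hcsup]; linarith
  refine ⟨part1, ?_⟩
  by_cases hval : ∃ p q r, a ≤ p ∧ p < q ∧ q < r ∧ r ≤ b ∧ h q < min (h p) (h r)
  · -- valley case : show B a ≤ F
    obtain ⟨p₁, q₁, r₁, hp₁, hpq₁, hqr₁, hr₁, hv₁⟩ := hval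
    set R : Set ℝ := {r | r ∈ Ioc a b ∧ ∃ p q, a ≤ p ∧ p < q ∧ q < r ∧ h q < min (h p) (h r)}
      with hR
    have hRne : R.Nonempty := ⟨r₁, ⟨lt_of_le_of_lt hp₁ (hpq₁.trans hqr₁), hr₁⟩,
      p₁, q₁, hp₁, hpq₁, hqr₁, hv₁⟩
    have hRbdd : BddBelow R := ⟨a, fun r hr => hr.1.1.le⟩
    set r₀ : ℝ := sInf R with hr₀
    have hr₀a : a ≤ r₀ := le_csInf hRne (fun r hr => hr.1.1.le)
    have hr₀b : r₀ ≤ b := (csInf_le hRbdd hRne.some_mem).trans hRne.some_mem.1.2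
    have hr₀mem : r₀ ∈ Icc a b := ⟨hr₀a, hr₀b⟩
    -- no valley in [a, r₀]
    have hnv : ∀ p' q' r', p' ∈ Icc a r₀ → q' ∈ Icc a r₀ → r' ∈ Icc a r₀ →
        p' < q' → q' < r' → min (h p') (h r') ≤ h q' := by
      intro p' q' r' hp' hq' hr' hpq hqr
      by_contra hcon
      push_neg at hcon
      rcases lt_or_eq_of_le hr'.2 with hlt | heq
      · have : r' ∈ R := ⟨⟨lt_of_le_of_lt hp'.1 (hpq.trans hqr), hlt.le.trans hr₀b⟩,
          p', q', hp'.1, hpq, hqr, hcon⟩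
        exact absurd (csInf_le hRbdd this) (not_le.mpr hlt)
      · -- r' = r₀ : use continuity to find a point below r₀
        have hr'mem : r' ∈ Icc a b := ⟨hp'.1.trans (hpq.trans hqr).le, hr'.2.trans hr₀b⟩
        have hsub : Ioo q' r' ⊆ Icc a b :=
          fun t ht => ⟨(hp'.1.trans hpq.le).trans ht.1.le, ht.2.le.trans hr'mem.2⟩
        haveI hne : (𝓝[Ioo q' r'] r').NeBot := right_nhdsWithin_Ioo_neBot hqr
        have hcw : ContinuousWithinAt h (Ioo q' r') r' := (hhc r' hr'mem).mono hsub
        have hev : ∀ᶠ t in 𝓝[Ioo q' r'] r', h q' < h t :=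
          hcw (Ioi_mem_nhds (lt_of_lt_of_le hcon (min_le_right _ _)))
        have hev2 : ∀ᶠ t in 𝓝[Ioo q' r'] r', t ∈ Ioo q' r' := self_mem_nhdsWithin
        obtain ⟨t, ht1, ht2⟩ := (hev.and hev2).exists
        have htR : t ∈ R := ⟨⟨lt_of_le_of_lt hp'.1 (hpq.trans ht2.1), (ht2.2.le.trans hr'.2).trans hr₀b⟩,
          p', q', hp'.1, hpq, ht2.1, lt_min (lt_of_lt_of_le hcon (min_le_left _ _)) ht1⟩
        have h5 : r₀ ≤ t := csInf_le hRbdd htR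
        have h6 : t < r₀ := ht2.2.trans_le hr'.2
        exact absurd h5 (not_le.mpr h6)
    -- max on [a, r₀]
    obtain ⟨c₀, hc₀mem, hc₀max, _⟩ := exists_max_sSup hr₀a (hhc.mono (Icc_subset_Icc le_rfl hr₀b))
    -- ∀ r ∈ R, h c₀ < A r - B a
    have claim3 : ∀ r ∈ R, h c₀ < A r - B a := by
      rintro r ⟨hrIoc, p, q, hp, hpq, hqr, hv⟩
      have hrb : r ≤ b := hrIoc.2
      have hr₀r : r₀ ≤ r := csInf_le hRbdd ⟨hrIoc, p, q, hp, hpq, hqr, hv⟩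
      obtain ⟨c', hc'mem, hc'max, _⟩ :=
        exists_max_sSup (hr₀a.trans hr₀r) (hhc.mono (Icc_subset_Icc le_rfl hrb))
      have hc₀c' : h c₀ ≤ h c' :=
        hc'max c₀ ⟨hc₀mem.1, hc₀mem.2.trans hr₀r⟩
      have hpmem : p ∈ Icc a r := ⟨hp, (hpq.trans hqr).le⟩
      have hrmem : r ∈ Icc a r := ⟨hrIoc.1.le, le_rfl⟩
      rcases le_or_gt c' q with hcq | hqc
      · have hcne : c' ≠ q := by
          intro heq
          have : h q < h c' := lt_of_lt_of_le hv ((min_le_left _ _).trans (hc'max p hpmem))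
          rw [heq] at this; exact lt_irrefl _ this
        have hc'q : c' < q := lt_of_le_of_ne hcq hcne
        have hstar' := hstar c' q r hc'mem.1 hc'q hqr hrb
          (lt_min (lt_of_lt_of_le hv ((min_le_left _ _).trans (hc'max p hpmem)))
            (lt_of_lt_of_le hv (min_le_right _ _)))
        have hBc' : B a ≤ B c' := hBmono ⟨le_rfl, hab⟩ ⟨hc'mem.1, hc'mem.2.trans hrb⟩ hc'mem.1
        have : h c' ≤ max (h c') (h r) := le_max_left _ _
        linarith
      · have hstar' := hstar p q c' hp hpq hqc (hc'mem.2.trans hrb)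
          (lt_min (lt_of_lt_of_le hv (min_le_left _ _))
            (lt_of_lt_of_le hv ((min_le_right _ _).trans (hc'max r hrmem))))
        have hBp : B a ≤ B p := hBmono ⟨le_rfl, hab⟩ ⟨hp, (hpq.trans hqr).le.trans hrb⟩ hp
        have hAr : A c' ≤ A r := hAmono ⟨hc'mem.1, hc'mem.2.trans hrb⟩ ⟨hrIoc.1.le, hrb⟩ hc'mem.2
        have : h c' ≤ max (h p) (h c') := le_max_right _ _
        linarith
    -- limit : h c₀ ≤ A r₀ - B a
    have claim4 : h c₀ ≤ A r₀ - B a := by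
      by_contra hlt
      push_neg at hlt
      set ε : ℝ := h c₀ - (A r₀ - B a) with hε
      have hεpos : 0 < ε := by simp [hε]; linarith
      have hcwA : ContinuousWithinAt A (Icc a b) r₀ := hAc r₀ hr₀mem
      rw [Metric.continuousWithinAt_iff] at hcwA
      obtain ⟨δ, hδpos, hδ⟩ := hcwA ε hεpos
      obtain ⟨r, hrR, hrlt⟩ := (csInf_lt_iff hRbdd hRne).mp
        (show sInf R < r₀ + δ by rw [← hr₀]; linarith)
      have hrr₀ : r₀ ≤ r := csInf_le hRbdd hrR
      have hrmem : r ∈ Icc a b := ⟨hrR.1.1.le, hrR.1.2⟩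
      have hdist : dist r r₀ < δ := by
        rw [Real.dist_eq, abs_of_nonneg (by linarith)]; linarith
      have hA : dist (A r) (A r₀) < ε := hδ hrmem hdist
      rw [Real.dist_eq] at hA
      have h1 : A r - A r₀ < ε := lt_of_le_of_lt (le_abs_self _) hA
      have h2 := claim3 r hrR
      rw [hε] at h1
      linarith
    -- variation bounds
    have hv1 : (eVariationOn h (Icc a r₀)).toReal ≤ 2 * h c₀ - h a - h r₀ := by
      have := evar_le_of_no_valley hr₀a hnv (fun t ht => hc₀max t ht)
      have hnn : 0 ≤ 2 * h c₀ - h a - h r₀ := by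
        have := hc₀max a (left_mem_Icc.2 hr₀a)
        have := hc₀max r₀ (right_mem_Icc.2 hr₀a)
        linarith
      exact ENNReal.toReal_le_of_le_ofReal hnn this
    have hv2 : (eVariationOn h (Icc r₀ b)).toReal
        ≤ (A b - A r₀) + ((A b - h b) - (A r₀ - h r₀)) :=
      vreal_le hab hAmono hGmono hr₀a hr₀b le_rfl
    have hadd := vreal_add hab hAmono hGmono le_rfl hr₀a hr₀b le_rfl
    have hF : A r₀ - h c₀ ≤ A b - (1/2)*(V + h a + h b) := by
      rw [hV, hadd]; linarith
    have hBaF : B a ≤ A b - (1/2)*(V + h a + h b) := by linarith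
    rw [min_eq_left hBaF, min_eq_left (hBaF.trans part1)]
  · -- no valley : V = 2 h c - h a - h b
    push_neg at hval
    have hnv : ∀ p' q' r', p' ∈ Icc a b → q' ∈ Icc a b → r' ∈ Icc a b →
        p' < q' → q' < r' → min (h p') (h r') ≤ h q' :=
      fun p' q' r' hp' _ hr' h1 h2 => hval p' q' r' hp'.1 h1 h2 hr'.2
    have hvle : V ≤ 2 * h c - h a - h b := by
      have := evar_le_of_no_valley hab hnv (fun t ht => hcmax t ht)
      have hnn : 0 ≤ 2 * h c - h a - h b := by
        have := hcmax a (left_mem_Icc.2 hab)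
        have := hcmax b (right_mem_Icc.2 hab)
        linarith
      exact ENNReal.toReal_le_of_le_ofReal hnn this
    have hVeq : V = 2 * h c - h a - h b := le_antisymm hvle hVlow
    rw [hcsup, hVeq]
    have : A b - 1/2*((2 * h c - h a - h b) + h a + h b) = A b - h c := by ring
    rw [this]

theorem coreB {q : ℝ} (hab : a ≤ b)
    (hhc : ContinuousOn h (Icc a b))
    (hAmono : MonotoneOn A (Icc a b))
    (hGmono : MonotoneOn (fun t => A t - h t) (Icc a b))
    (haq : a < q) (hqb : q < b) (hq : h q < min (h a) (h b))
    (hwidth : A b - B a ≤ max (h a) (h b)) :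
    A b - (1/2)*((eVariationOn h (Icc a b)).toReal + h a + h b)
      < min (B a) (A b - sSup (h '' Icc a b)) := by
  obtain ⟨c, hcmem, hcmax, hcsup⟩ := exists_max_sSup hab hhc
  obtain ⟨c₁, hc₁mem, hc₁max, _⟩ := exists_max_sSup haq.le (hhc.mono (Icc_subset_Icc le_rfl hqb.le))
  obtain ⟨c₂, hc₂mem, hc₂max, _⟩ := exists_max_sSup hqb.le (hhc.mono (Icc_subset_Icc haq.le le_rfl))
  set V : ℝ := (eVariationOn h (Icc a b)).toReal with hV
  -- V ≥ (h c₁ - h a) + (h c₁ - h q) + (h c₂ - h q) + (h c₂ - h b)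
  have e1 := vreal_add hab hAmono hGmono le_rfl haq.le hqb.le le_rfl
  have e2 := vreal_add hab hAmono hGmono le_rfl hc₁mem.1 hc₁mem.2 hqb.le
  have e3 := vreal_add hab hAmono hGmono haq.le hc₂mem.1 hc₂mem.2 le_rfl
  have d1 := vreal_dist hab hAmono hGmono le_rfl hc₁mem.1 (hc₁mem.2.trans hqb.le)
  have d2 := vreal_dist hab hAmono hGmono hc₁mem.1 hc₁mem.2 hqb.le
  have d3 := vreal_dist hab hAmono hGmono haq.le hc₂mem.1 (hc₂mem.2.trans le_rfl)
  have d4 := vreal_dist hab hAmono hGmono (haq.le.trans hc₂mem.1) hc₂mem.2 le_rfl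
  have a1 : h c₁ - h a ≤ |h c₁ - h a| := le_abs_self _
  have a2 : h c₁ - h q ≤ |h q - h c₁| := by rw [abs_sub_comm]; exact le_abs_self _
  have a3 : h c₂ - h q ≤ |h c₂ - h q| := le_abs_self _
  have a4 : h c₂ - h b ≤ |h b - h c₂| := by rw [abs_sub_comm]; exact le_abs_self _
  have hVlow : (h c₁ - h a) + (h c₁ - h q) + ((h c₂ - h q) + (h c₂ - h b)) ≤ V := by
    rw [hV, e1, e2, e3]; linarith
  have hha : h a ≤ h c₁ := hc₁max a (left_mem_Icc.2 haq.le)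
  have hhb : h b ≤ h c₂ := hc₂max b (right_mem_Icc.2 hqb.le)
  have hqa : h q < h a := lt_of_lt_of_le hq (min_le_left _ _)
  have hqb' : h q < h b := lt_of_lt_of_le hq (min_le_right _ _)
  have hcsplit : h c ≤ max (h c₁) (h c₂) := by
    rcases le_total c q with hcq | hqc
    · exact le_max_of_le_left (hc₁max c ⟨hcmem.1, hcq⟩)
    · exact le_max_of_le_right (hc₂max c ⟨hqc, hcmem.2⟩)
  rw [hcsup]
  refine lt_min ?_ ?_
  · -- F < B a
    rcases le_total (h b) (h a) with hba | hab'
    · rw [max_eq_left hba] at hwidth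
      have : h a ≤ h c₁ := hha
      linarith
    · rw [max_eq_right hab'] at hwidth
      linarith
  · -- F < A b - h c
    rcases max_cases (h c₁) (h c₂) with ⟨hmax, _⟩ | ⟨hmax, _⟩ <;>
      [have hc' : h c ≤ h c₁ := hcsplit.trans_eq hmax;
       have hc' : h c ≤ h c₂ := hcsplit.trans_eq hmax] <;> linarith
end Main

lemma exists_min_sInf {h : ℝ → ℝ} {p r : ℝ} (hpr : p ≤ r) (hc : ContinuousOn h (Icc p r)) :
    ∃ c ∈ Icc p r, (∀ t ∈ Icc p r, h c ≤ h t) ∧ sInf (h '' Icc p r) = h c := by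
  obtain ⟨c, hcmem, hcmin⟩ := isCompact_Icc.exists_isMinOn (nonempty_Icc.2 hpr) hc
  refine ⟨c, hcmem, fun t ht => hcmin ht, le_antisymm ?_ ?_⟩
  · exact csInf_le ⟨h c, by rintro y ⟨t, ht, rfl⟩; exact hcmin ht⟩ ⟨c, hcmem, rfl⟩
  · exact le_csInf ((nonempty_Icc.2 hpr).image h) (by rintro y ⟨t, ht, rfl⟩; exact hcmin ht)

lemma Gamma_cont {φ Γ : ℝ → ℝ} (hφcont : ContinuousOn φ (Icc 0 1))
    (hΓlip : ∀ t₁ t₂ : ℝ, t₁ ∈ Icc (0:ℝ) 1 → t₂ ∈ Icc (0:ℝ) 1 → t₁ ≤ t₂ →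
      0 ≤ Γ t₂ - Γ t₁ ∧ Γ t₂ - Γ t₁ ≤ (t₂ - t₁) + (φ t₂ - φ t₁)) :
    ContinuousOn Γ (Icc 0 1) := by
  intro x hx
  have key : ∀ t ∈ Icc (0:ℝ) 1, |Γ t - Γ x| ≤ |t - x| + |φ t - φ x| := by
    intro t ht
    rcases le_total t x with htx | hxt
    · obtain ⟨hl, hu⟩ := hΓlip t x ht hx htx
      rw [abs_sub_comm, abs_of_nonneg hl, abs_sub_comm t x, abs_sub_comm (φ t) (φ x)]
      calc Γ x - Γ t ≤ (x - t) + (φ x - φ t) := hu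
        _ ≤ |x - t| + |φ x - φ t| := add_le_add (le_abs_self _) (le_abs_self _)
    · obtain ⟨hl, hu⟩ := hΓlip x t hx ht hxt
      rw [abs_of_nonneg hl]
      calc Γ t - Γ x ≤ (t - x) + (φ t - φ x) := hu
        _ ≤ |t - x| + |φ t - φ x| := add_le_add (le_abs_self _) (le_abs_self _)
  rw [Metric.continuousWithinAt_iff]
  intro ε hε
  have hφ := hφcont x hx
  rw [Metric.continuousWithinAt_iff] at hφ
  obtain ⟨δ, hδpos, hφδ⟩ := hφ (ε/2) (by linarith)
  refine ⟨min δ (ε/4), lt_min hδpos (by linarith), fun t ht hdist => ?_⟩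
  have h1 : dist t x < δ := lt_of_lt_of_le hdist (min_le_left _ _)
  have h2 : dist t x < ε/4 := lt_of_lt_of_le hdist (min_le_right _ _)
  have h3 := hφδ ht h1
  rw [Real.dist_eq] at *
  calc |Γ t - Γ x| ≤ |t - x| + |φ t - φ x| := key t ht
    _ < ε/4 + ε/2 := add_lt_add h2 h3
    _ < ε := by linarith

lemma sV_eq (f : ℝ → ℝ) {p r : ℝ} (hp : p ∈ Icc (0:ℝ) 1) (hr : r ∈ Icc (0:ℝ) 1) (hpr : p ≤ r) :
    sV f p r = (eVariationOn f (Icc p r)).toReal := by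
  rw [sV, variationOnFromTo.eq_of_le f (Icc 0 1) hpr,
    Set.inter_eq_self_of_subset_right (Icc_subset_Icc hp.1 hr.2)]


theorem stmt_17
    (φ Γ : ℝ → ℝ)
    (hφcont : ContinuousOn φ (Set.Icc 0 1))
    (hφmono : StrictMonoOn φ (Set.Icc 0 1))
    (hφ0 : φ 0 = 0) (hφ1 : φ 1 = 1)
    (hΓrange : ∀ t ∈ Set.Icc (0:ℝ) 1, max 0 (t + φ t - 1) ≤ Γ t ∧ Γ t ≤ min t (φ t))
    (hΓlip : ∀ t₁ t₂ : ℝ, t₁ ∈ Set.Icc (0:ℝ) 1 → t₂ ∈ Set.Icc (0:ℝ) 1 → t₁ ≤ t₂ →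
      0 ≤ Γ t₂ - Γ t₁ ∧ Γ t₂ - Γ t₁ ≤ (t₂ - t₁) + (φ t₂ - φ t₁))
    (ψ : ℝ → ℝ)
    (hψmem : ∀ y ∈ Set.Icc (0:ℝ) 1, ψ y ∈ Set.Icc (0:ℝ) 1)
    (hψφ : ∀ t ∈ Set.Icc (0:ℝ) 1, ψ (φ t) = t)
    (hφψ : ∀ y ∈ Set.Icc (0:ℝ) 1, φ (ψ y) = y) :
    (∀ x ∈ Set.Icc (0:ℝ) 1, ∀ y ∈ Set.Icc (0:ℝ) 1, splice φ ψ Γ x y = AG φ ψ Γ x y) ↔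
      (∀ x ∈ Set.Icc (0:ℝ) 1, ∀ y ∈ Set.Icc (0:ℝ) 1,
        ((φ x < y ∧ sInf (Gtil φ Γ '' Set.Icc x (ψ y)) < min (Gtil φ Γ x) (Gtil φ Γ (ψ y))) →
          y - x > max (Gtil φ Γ x) (Gtil φ Γ (ψ y))) ∧
        ((y < φ x ∧ sInf (Ghat Γ '' Set.Icc (ψ y) x) < min (Ghat Γ x) (Ghat Γ (ψ y))) →
          x - y > max (Ghat Γ x) (Ghat Γ (ψ y)))) := by
  have h0mem : (0:ℝ) ∈ Icc (0:ℝ) 1 := by norm_num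
  have h1mem : (1:ℝ) ∈ Icc (0:ℝ) 1 := by norm_num
  have hφmono' : MonotoneOn φ (Icc 0 1) := hφmono.monotoneOn
  have hφmem : ∀ t ∈ Icc (0:ℝ) 1, φ t ∈ Icc (0:ℝ) 1 := by
    intro t ht
    exact ⟨hφ0 ▸ hφmono' h0mem ht ht.1, hφ1 ▸ hφmono' ht h1mem ht.2⟩
  have hφlt : ∀ {s t : ℝ}, s ∈ Icc (0:ℝ) 1 → t ∈ Icc (0:ℝ) 1 → φ s < φ t → s < t := by
    intro s t hs ht hlt
    by_contra hc; push_neg at hc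
    exact absurd (hφmono' ht hs hc) (not_le.mpr hlt)
  have hΓc : ContinuousOn Γ (Icc 0 1) := Gamma_cont hφcont hΓlip
  have hh1c : ContinuousOn (Ghat Γ) (Icc 0 1) := continuousOn_id.sub hΓc
  have hh2c : ContinuousOn (Gtil φ Γ) (Icc 0 1) := hφcont.sub hΓc
  have hh1nn : ∀ t ∈ Icc (0:ℝ) 1, 0 ≤ Ghat Γ t := by
    intro t ht
    have := le_trans (hΓrange t ht).2 (min_le_left t (φ t))
    simp only [Ghat]; linarith
  have hh2nn : ∀ t ∈ Icc (0:ℝ) 1, 0 ≤ Gtil φ Γ t := by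
    intro t ht
    have := le_trans (hΓrange t ht).2 (min_le_right t (φ t))
    simp only [Gtil]; linarith
  constructor
  · -- equality ⇒ condition
    intro heq x hx y hy
    constructor
    · -- region above the curve
      rintro ⟨hxy, hinf⟩
      by_contra hcon
      push_neg at hcon
      set b := ψ y with hbdef
      have hbmem : b ∈ Icc (0:ℝ) 1 := hψmem y hy
      have hφb : φ b = y := hφψ y hy
      have hxb : x < b := hφlt hx hbmem (by rw [hφb]; exact hxy)
      have hsub : Icc x b ⊆ Icc (0:ℝ) 1 := Icc_subset_Icc hx.1 hbmem.2
      obtain ⟨q, hqmem, hqmin, hqinf⟩ := exists_min_sInf hxb.le (hh2c.mono hsub)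
      rw [hqinf] at hinf
      have hqx : x < q := by
        rcases eq_or_lt_of_le hqmem.1 with e | l
        · exact absurd hinf (by rw [← e]; exact not_lt.mpr (min_le_left _ _))
        · exact l
      have hqb : q < b := by
        rcases eq_or_lt_of_le hqmem.2 with e | l
        · exact absurd hinf (by rw [e]; exact not_lt.mpr (min_le_right _ _))
        · exact l
      have hGmono2 : MonotoneOn (fun t => φ t - Gtil φ Γ t) (Icc x b) := by
        intro s hs t ht hst
        have := (hΓlip s t (hsub hs) (hsub ht) hst).1
        simp only [Gtil]; linarith
      have hBres := coreB (a := x) (b := b) (h := Gtil φ Γ) (A := φ) (B := id)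
        hxb.le (hh2c.mono hsub) (hφmono'.mono hsub) hGmono2 hqx hqb hinf
        (by simp only [id_eq]; rw [hφb]; exact hcon)
      simp only [id_eq] at hBres
      rw [hφb] at hBres
      have hf2 : f2 φ ψ Γ x y
          = y - (1/2)*((eVariationOn (Gtil φ Γ) (Icc x b)).toReal + Gtil φ Γ x + Gtil φ Γ b) := by
        simp only [f2, ← hbdef]
        rw [sV_eq _ hx hbmem hxb.le]
      have hVnn : 0 ≤ (eVariationOn (Gtil φ Γ) (Icc x b)).toReal := ENNReal.toReal_nonneg
      have hf2y : f2 φ ψ Γ x y ≤ y := by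
        rw [hf2]
        have := hh2nn x hx
        have := hh2nn b hbmem
        linarith
      have hf2x : f2 φ ψ Γ x y < x := by
        rw [hf2]; exact lt_of_lt_of_le hBres (min_le_left _ _)
      have hs := heq x hx y hy
      simp only [splice, AG] at hs
      rw [if_neg (not_le.mpr hxy), if_neg (not_le.mpr hxy)] at hs
      simp only [C2, ← hbdef] at hs
      rw [min_eq_right hf2y, min_eq_right hf2x.le, hf2] at hs
      rw [← hs] at hBres
      exact lt_irrefl _ hBres
    · -- region below the curve
      rintro ⟨hyx, hinf⟩
      by_contra hcon
      push_neg at hcon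
      set a := ψ y with hadef
      have hamem : a ∈ Icc (0:ℝ) 1 := hψmem y hy
      have hφa : φ a = y := hφψ y hy
      have hax : a < x := hφlt hamem hx (by rw [hφa]; exact hyx)
      have hsub : Icc a x ⊆ Icc (0:ℝ) 1 := Icc_subset_Icc hamem.1 hx.2
      obtain ⟨q, hqmem, hqmin, hqinf⟩ := exists_min_sInf hax.le (hh1c.mono hsub)
      rw [hqinf] at hinf
      rw [min_comm] at hinf
      have hqa : a < q := by
        rcases eq_or_lt_of_le hqmem.1 with e | l
        · exact absurd hinf (by rw [← e]; exact not_lt.mpr (min_le_left _ _))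
        · exact l
      have hqx : q < x := by
        rcases eq_or_lt_of_le hqmem.2 with e | l
        · exact absurd hinf (by rw [e]; exact not_lt.mpr (min_le_right _ _))
        · exact l
      have hGmono1 : MonotoneOn (fun t => id t - Ghat Γ t) (Icc a x) := by
        intro s hs t ht hst
        have := (hΓlip s t (hsub hs) (hsub ht) hst).1
        simp only [Ghat, id_eq]; linarith
      have hBres := coreB (a := a) (b := x) (h := Ghat Γ) (A := id) (B := φ)
        hax.le (hh1c.mono hsub) (fun s _ t _ hst => hst) hGmono1 hqa hqx hinf
        (by simp only [id_eq]; rw [hφa, max_comm (Ghat Γ a)]; exact hcon)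
      simp only [id_eq] at hBres
      rw [hφa] at hBres
      have hf1 : f1 ψ Γ x y
          = x - (1/2)*((eVariationOn (Ghat Γ) (Icc a x)).toReal + Ghat Γ a + Ghat Γ x) := by
        simp only [f1, ← hadef]
        rw [sV_eq _ hamem hx hax.le]; ring
      have hf1y : f1 ψ Γ x y < y := by
        rw [hf1]; exact lt_of_lt_of_le hBres (min_le_left _ _)
      have hf1x : f1 ψ Γ x y < x := by
        rw [hf1]
        refine lt_of_lt_of_le (lt_of_lt_of_le hBres (min_le_right _ _)) ?_
        obtain ⟨c, hcmem, hcmax, hcsup⟩ := exists_max_sSup hax.le (hh1c.mono hsub)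
        have := hh1nn c (hsub hcmem)
        rw [hcsup]; linarith
      have hs := heq x hx y hy
      simp only [splice, AG] at hs
      rw [if_pos hyx.le, if_pos hyx.le] at hs
      simp only [C1, ← hadef] at hs
      rw [min_eq_right hf1y.le, min_eq_right hf1x.le, hf1] at hs
      rw [← hs] at hBres
      exact lt_irrefl _ hBres
  · -- condition ⇒ equality
    intro hcond x hx y hy
    by_cases hxy : y ≤ φ x
    · -- region below : use C1
      set a := ψ y with hadef
      have hamem : a ∈ Icc (0:ℝ) 1 := hψmem y hy
      have hφa : φ a = y := hφψ y hy
      have hax : a ≤ x := by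
        by_contra hc; push_neg at hc
        exact absurd (by rw [hφa]; exact hxy : φ a ≤ φ x)
          (not_le.mpr (hφmono hx hamem hc))
      have hsub : Icc a x ⊆ Icc (0:ℝ) 1 := Icc_subset_Icc hamem.1 hx.2
      have hstar : ∀ p q r, a ≤ p → p < q → q < r → r ≤ x →
          Ghat Γ q < min (Ghat Γ p) (Ghat Γ r) →
          max (Ghat Γ p) (Ghat Γ r) < id r - φ p := by
        intro p q r hp hpq hqr hrx hvq
        have hp01 : p ∈ Icc (0:ℝ) 1 := hsub ⟨hp, ((hpq.trans hqr).le).trans hrx⟩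
        have hq01 : q ∈ Icc (0:ℝ) 1 := hsub ⟨hp.trans hpq.le, hqr.le.trans hrx⟩
        have hr01 : r ∈ Icc (0:ℝ) 1 := hsub ⟨hp.trans (hpq.trans hqr).le, hrx⟩
        have hcond2 := (hcond r hr01 (φ p) (hφmem p hp01)).2
        rw [hψφ p hp01] at hcond2
        have hφpr : φ p < φ r := hφmono hp01 hr01 (hpq.trans hqr)
        have hbdd : BddBelow (Ghat Γ '' Icc p r) :=
          ⟨0, by rintro u ⟨t, ht, rfl⟩; exact hh1nn t (Icc_subset_Icc hp01.1 hr01.2 ht)⟩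
        have hinf : sInf (Ghat Γ '' Icc p r) < min (Ghat Γ r) (Ghat Γ p) := by
          rw [min_comm]
          exact lt_of_le_of_lt (csInf_le hbdd ⟨q, ⟨hpq.le, hqr.le⟩, rfl⟩) hvq
        have := hcond2 ⟨hφpr, hinf⟩
        simp only [id_eq]
        rw [max_comm (Ghat Γ p)]
        exact this
      have hGmono1 : MonotoneOn (fun t => id t - Ghat Γ t) (Icc a x) := by
        intro s hs t ht hst
        have := (hΓlip s t (hsub hs) (hsub ht) hst).1
        simp only [Ghat, id_eq]; linarith
      have hAres := coreA (a := a) (b := x) (h := Ghat Γ) (A := id) (B := φ) hax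
        (hh1c.mono hsub) (fun s _ t _ hst => hst) continuousOn_id hGmono1
        (hφmono'.mono hsub) hstar
      obtain ⟨hF1, hF2⟩ := hAres
      simp only [id_eq] at hF1 hF2
      rw [hφa] at hF2
      have hf1 : f1 ψ Γ x y
          = x - (1/2)*((eVariationOn (Ghat Γ) (Icc a x)).toReal + Ghat Γ a + Ghat Γ x) := by
        simp only [f1, ← hadef]
        rw [sV_eq _ hamem hx hax]; ring
      obtain ⟨c, hcmem, hcmax, hcsup⟩ := exists_max_sSup hax (hh1c.mono hsub)
      have hMnn : 0 ≤ sSup (Ghat Γ '' Icc a x) := by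
        rw [hcsup]; exact hh1nn c (hsub hcmem)
      have hf1x : f1 ψ Γ x y ≤ x := by
        rw [hf1]; linarith [hF1]
      simp only [splice, AG]
      rw [if_pos hxy, if_pos hxy]
      simp only [C1, ← hadef]
      rw [min_eq_right ((min_le_right y (f1 ψ Γ x y)).trans hf1x), hf1]
      exact hF2
    · -- region above : use C2
      push_neg at hxy
      set b := ψ y with hbdef
      have hbmem : b ∈ Icc (0:ℝ) 1 := hψmem y hy
      have hφb : φ b = y := hφψ y hy
      have hxb : x ≤ b := (hφlt hx hbmem (by rw [hφb]; exact hxy)).le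
      have hsub : Icc x b ⊆ Icc (0:ℝ) 1 := Icc_subset_Icc hx.1 hbmem.2
      have hstar : ∀ p q r, x ≤ p → p < q → q < r → r ≤ b →
          Gtil φ Γ q < min (Gtil φ Γ p) (Gtil φ Γ r) →
          max (Gtil φ Γ p) (Gtil φ Γ r) < φ r - id p := by
        intro p q r hp hpq hqr hrb hvq
        have hp01 : p ∈ Icc (0:ℝ) 1 := hsub ⟨hp, ((hpq.trans hqr).le).trans hrb⟩
        have hq01 : q ∈ Icc (0:ℝ) 1 := hsub ⟨hp.trans hpq.le, hqr.le.trans hrb⟩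
        have hr01 : r ∈ Icc (0:ℝ) 1 := hsub ⟨hp.trans (hpq.trans hqr).le, hrb⟩
        have hcond1 := (hcond p hp01 (φ r) (hφmem r hr01)).1
        rw [hψφ r hr01] at hcond1
        have hφpr : φ p < φ r := hφmono hp01 hr01 (hpq.trans hqr)
        have hbdd : BddBelow (Gtil φ Γ '' Icc p r) :=
          ⟨0, by rintro u ⟨t, ht, rfl⟩; exact hh2nn t (Icc_subset_Icc hp01.1 hr01.2 ht)⟩
        have hinf : sInf (Gtil φ Γ '' Icc p r) < min (Gtil φ Γ p) (Gtil φ Γ r) :=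
          lt_of_le_of_lt (csInf_le hbdd ⟨q, ⟨hpq.le, hqr.le⟩, rfl⟩) hvq
        have := hcond1 ⟨hφpr, hinf⟩
        simp only [id_eq]
        exact this
      have hGmono2 : MonotoneOn (fun t => φ t - Gtil φ Γ t) (Icc x b) := by
        intro s hs t ht hst
        have := (hΓlip s t (hsub hs) (hsub ht) hst).1
        simp only [Gtil]; linarith
      have hAres := coreA (a := x) (b := b) (h := Gtil φ Γ) (A := φ) (B := id) hxb
        (hh2c.mono hsub) (hφmono'.mono hsub) (hφcont.mono hsub) hGmono2
        (fun s _ t _ hst => hst) hstar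
      obtain ⟨hF1, hF2⟩ := hAres
      simp only [id_eq] at hF1 hF2
      rw [hφb] at hF1 hF2
      have hf2 : f2 φ ψ Γ x y
          = y - (1/2)*((eVariationOn (Gtil φ Γ) (Icc x b)).toReal + Gtil φ Γ x + Gtil φ Γ b) := by
        simp only [f2, ← hbdef]
        rw [sV_eq _ hx hbmem hxb]
      obtain ⟨c, hcmem, hcmax, hcsup⟩ := exists_max_sSup hxb (hh2c.mono hsub)
      have hMnn : 0 ≤ sSup (Gtil φ Γ '' Icc x b) := by
        rw [hcsup]; exact hh2nn c (hsub hcmem)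
      have hf2y : f2 φ ψ Γ x y ≤ y := by
        rw [hf2]; linarith [hF1]
      simp only [splice, AG]
      rw [if_neg (not_le.mpr hxy), if_neg (not_le.mpr hxy)]
      simp only [C2, ← hbdef]
      rw [min_eq_right hf2y, hf2]
      exact hF2
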